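/- Let $f : X \to X$ be a continuous map on a compact metric space, $A \subseteq X$ an invariant closed subset, and $\{x_i\}_{i=0}^{\infty}$ an asymptotic average pseudo-orbit of $f$ such that for every $\varepsilon > 0$ there exists $n$ with $\frac{1}{n}\#\{0 \leq i < n : d(f^i(x), A) < \varepsilon\} > 1 - \varepsilon$ for every $x \in X$. Then there exists a set $J \subseteq \mathbb{N}$ of density zero such that $\lim_{i \to \infty, i \notin J} d(x_i, A) = 0$. -/

import Mathlib

open Filter Metric
open scoped Classical

lemma density_zero_of_cesaro (a : ℕ → ℝ) (ha : ∀ i, 0 ≤ a i)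
    (h : Tendsto (fun n => (∑ i ∈ Finset.range n, a i) / n) atTop (nhds 0)) :
    ∃ J : Set ℕ,
      Tendsto (fun n => (((Finset.range n).filter (fun i => i ∈ J)).card : ℝ) / n)
        atTop (nhds 0) ∧
      ∀ ε > 0, ∃ N : ℕ, ∀ i ≥ N, i ∉ J → a i < ε := by
  have hthr : ∀ k : ℕ, ∃ T : ℕ, ∀ n ≥ T,
      (((Finset.range n).filter (fun i => 1/(k+1:ℝ) ≤ a i)).card : ℝ) / n < 1/(k+1) := by
    intro k
    have hk : (0:ℝ) < 1/(k+1) := by positivity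
    have hle : ∀ n : ℕ,
        (((Finset.range n).filter (fun i => 1/(k+1:ℝ) ≤ a i)).card : ℝ) / n
          ≤ (k+1) * ((∑ i ∈ Finset.range n, a i) / n) := by
      intro n
      have h1 : (((Finset.range n).filter (fun i => 1/(k+1:ℝ) ≤ a i)).card : ℝ) * (1/(k+1))
          ≤ ∑ i ∈ Finset.range n, a i := by
        calc (((Finset.range n).filter (fun i => 1/(k+1:ℝ) ≤ a i)).card : ℝ) * (1/(k+1))
            = ∑ _i ∈ (Finset.range n).filter (fun i => 1/(k+1:ℝ) ≤ a i), (1/(k+1):ℝ) := by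
              rw [Finset.sum_const]; ring
          _ ≤ ∑ i ∈ (Finset.range n).filter (fun i => 1/(k+1:ℝ) ≤ a i), a i :=
              Finset.sum_le_sum (fun i hi => (Finset.mem_filter.mp hi).2)
          _ ≤ ∑ i ∈ Finset.range n, a i :=
              Finset.sum_le_sum_of_subset_of_nonneg (Finset.filter_subset _ _)
                (fun i _ _ => ha i)
      have h2 : (((Finset.range n).filter (fun i => 1/(k+1:ℝ) ≤ a i)).card : ℝ)
          ≤ (k+1) * (∑ i ∈ Finset.range n, a i) := by
        have hk1 : (0:ℝ) < (k:ℝ)+1 := by positivity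
        have h3 := mul_le_mul_of_nonneg_right h1 hk1.le
        rw [mul_assoc, one_div_mul_cancel (ne_of_gt hk1), mul_one] at h3
        linarith
      rw [← mul_div_assoc]
      gcongr
    have h2 : Tendsto (fun n => (k+1) * ((∑ i ∈ Finset.range n, a i) / n)) atTop (nhds 0) := by
      simpa using h.const_mul (k+1:ℝ)
    obtain ⟨T, hT⟩ := (Metric.tendsto_atTop.mp h2) (1/(k+1)) hk
    refine ⟨T, fun n hn => ?_⟩
    have h3 := hT n hn
    rw [Real.dist_eq, sub_zero] at h3
    have h4 := le_abs_self ((k+1) * ((∑ i ∈ Finset.range n, a i) / n))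
    have h5 := hle n
    linarith
  choose T hT using hthr
  obtain ⟨N, hN0, hNsucc⟩ : ∃ N : ℕ → ℕ, N 0 = T 0 ∧ ∀ k, N (k+1) = max (N k + 1) (T (k+1)) :=
    ⟨fun k => Nat.rec (T 0) (fun k Nk => max (Nk+1) (T (k+1))) k, rfl, fun k => rfl⟩
  have hNmono : StrictMono N := by
    apply strictMono_nat_of_lt_succ
    intro k
    rw [hNsucc]
    exact lt_of_lt_of_le (Nat.lt_succ_self _) (le_max_left _ _)
  have hNT : ∀ k, T k ≤ N k := by
    intro k
    cases k with
    | zero => exact le_of_eq hN0.symm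
    | succ k => rw [hNsucc]; exact le_max_right _ _
  have hNprop : ∀ k, ∀ n ≥ N k,
      (((Finset.range n).filter (fun i => 1/(k+1:ℝ) ≤ a i)).card : ℝ) / n < 1/(k+1) :=
    fun k n hn => hT k n (le_trans (hNT k) hn)
  have hblock : ∀ i, N 0 ≤ i → ∃ m, N m ≤ i ∧ i < N (m+1) := by
    intro i hi
    have hex : ∃ m, i < N m := ⟨i+1, lt_of_lt_of_le (Nat.lt_succ_self i) (hNmono.le_apply)⟩
    have hfind := Nat.find_spec hex
    have hne : Nat.find hex ≠ 0 := by
      intro h0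
      rw [h0] at hfind
      exact absurd hfind (not_lt.mpr hi)
    obtain ⟨m, hm⟩ := Nat.exists_eq_succ_of_ne_zero hne
    rw [hm] at hfind
    refine ⟨m, ?_, hfind⟩
    exact le_of_not_gt (Nat.find_min hex (by omega))
  have hsub : ∀ m n, n < N (m+1) →
      (Finset.range n).filter (fun i => i ∈ {i | ∃ k, N k ≤ i ∧ i < N (k+1) ∧ 1/(k+1:ℝ) ≤ a i})
      ⊆ (Finset.range n).filter (fun i => 1/(m+1:ℝ) ≤ a i) := by
    intro m n hn i hi
    rw [Finset.mem_filter] at hi ⊢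
    obtain ⟨hin, k, hk1, hk2, hk3⟩ := hi
    refine ⟨hin, ?_⟩
    have hiln : i < n := Finset.mem_range.mp hin
    have hkm : k ≤ m := by
      by_contra hc
      push_neg at hc
      have h6 : N (m+1) ≤ N k := hNmono.le_iff_le.mpr hc
      exact absurd hk1 (not_le.mpr (lt_of_lt_of_le (hiln.trans hn) h6))
    calc (1:ℝ)/(m+1) ≤ 1/(k+1) := by
          apply one_div_le_one_div_of_le (by positivity)
          have : (k:ℝ) ≤ m := by exact_mod_cast hkm
          linarith
      _ ≤ a i := hk3
  have hge : ∀ K m n, N K ≤ n → n < N (m+1) → K ≤ m := by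
    intro K m n h1 h2
    by_contra hc
    push_neg at hc
    have h6 : N (m+1) ≤ N K := hNmono.le_iff_le.mpr hc
    exact absurd h1 (not_le.mpr (lt_of_lt_of_le h2 h6))
  refine ⟨{i | ∃ k, N k ≤ i ∧ i < N (k+1) ∧ 1/(k+1:ℝ) ≤ a i}, ?_, ?_⟩
  · rw [Metric.tendsto_atTop]
    intro ε hε
    obtain ⟨K, hK⟩ := exists_nat_one_div_lt hε
    refine ⟨N K, fun n hn => ?_⟩
    obtain ⟨m, hm1, hm2⟩ := hblock n (le_trans (hNmono.monotone (Nat.zero_le K)) hn)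
    have hKm : K ≤ m := hge K m n hn hm2
    have hcard : ((((Finset.range n).filter (fun i => i ∈ {i | ∃ k, N k ≤ i ∧ i < N (k+1) ∧ 1/(k+1:ℝ) ≤ a i})).card : ℝ))
        ≤ (((Finset.range n).filter (fun i => 1/(m+1:ℝ) ≤ a i)).card : ℝ) := by
      exact_mod_cast Finset.card_le_card (hsub m n hm2)
    have h1 := hNprop m n hm1
    have hnn : (0:ℝ) ≤ (n:ℝ)⁻¹ := by positivity
    rw [Real.dist_eq, sub_zero, abs_of_nonneg (by positivity)]
    have hdd : ((((Finset.range n).filter (fun i => i ∈ {i | ∃ k, N k ≤ i ∧ i < N (k+1) ∧ 1/(k+1:ℝ) ≤ a i})).card : ℝ)) / n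
        ≤ (((Finset.range n).filter (fun i => 1/(m+1:ℝ) ≤ a i)).card : ℝ) / n := by
      rw [div_eq_mul_inv, div_eq_mul_inv]
      exact mul_le_mul_of_nonneg_right hcard hnn
    have hmono : (1:ℝ)/(m+1) ≤ 1/(K+1) := by
      apply one_div_le_one_div_of_le (by positivity)
      have : (K:ℝ) ≤ m := by exact_mod_cast hKm
      linarith
    linarith
  · intro ε hε
    obtain ⟨K, hK⟩ := exists_nat_one_div_lt hε
    refine ⟨N K, fun i hi hiJ => ?_⟩
    obtain ⟨m, hm1, hm2⟩ := hblock i (le_trans (hNmono.monotone (Nat.zero_le K)) hi)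
    have hKm : K ≤ m := hge K m i hi hm2
    have hlt : ¬ (1/(m+1:ℝ) ≤ a i) := fun hc => hiJ ⟨m, hm1, hm2, hc⟩
    push_neg at hlt
    calc a i < 1/(m+1:ℝ) := hlt
      _ ≤ 1/(K+1:ℝ) := by
        apply one_div_le_one_div_of_le (by positivity)
        have : (K:ℝ) ≤ m := by exact_mod_cast hKm
        linarith
      _ < ε := hK


lemma sum_blocks (g : ℕ → ℝ) (m : ℕ) : ∀ q : ℕ,
    ∑ i ∈ Finset.range (q*m), g i = ∑ k ∈ Finset.range q, ∑ j ∈ Finset.range m, g (k*m+j) := by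
  intro q
  induction q with
  | zero => simp
  | succ q ih =>
    rw [Finset.sum_range_succ, ← ih, Nat.succ_mul, Finset.range_eq_Ico,
      ← Finset.sum_Ico_consecutive g (Nat.zero_le (q*m)) (Nat.le_add_right _ m)]
    congr 1
    rw [Finset.sum_Ico_eq_sum_range]
    simp
    rw [Finset.sum_Ico_eq_sum_range]
    simp

lemma shadow_lemma {X : Type*} [MetricSpace X] [CompactSpace X]
    (f : X → X) (hcont : Continuous f) :
    ∀ n₀ : ℕ, ∀ ε : ℝ, 0 < ε → ∃ δ, 0 < δ ∧ δ ≤ ε ∧ ∀ y : ℕ → X,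
      (∀ j < n₀, dist (f (y j)) (y (j+1)) < δ) →
      ∀ j ≤ n₀, dist (y j) (f^[j] (y 0)) < ε := by
  have huc : UniformContinuous f := CompactSpace.uniformContinuous_of_continuous hcont
  rw [Metric.uniformContinuous_iff] at huc
  intro n₀
  induction n₀ with
  | zero =>
    intro ε hε
    refine ⟨ε, hε, le_refl ε, fun y _ j hj => ?_⟩
    interval_cases j
    simp [hε]
  | succ n ih =>
    intro ε hε
    obtain ⟨η, hη, hη2⟩ := huc (ε/2) (by linarith)
    obtain ⟨δ', hδ', hδ'le, hsh⟩ := ih (min η (ε/2)) (by positivity)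
    refine ⟨min δ' (ε/2), by positivity, le_trans (min_le_right _ _) (by linarith), fun y hy j hj => ?_⟩
    rcases Nat.lt_or_ge j (n+1) with hj' | hj'
    · have := hsh y (fun j hjn => lt_of_lt_of_le (hy j (by omega)) (min_le_left _ _)) j (by omega)
      exact lt_of_lt_of_le this (le_trans (min_le_right _ _) (by linarith))
    · have hjeq : j = n + 1 := by omega
      subst hjeq
      have h1 : dist (y n) (f^[n] (y 0)) < min η (ε/2) :=
        hsh y (fun j hjn => lt_of_lt_of_le (hy j (by omega)) (min_le_left _ _)) n (le_refl n)
      have h2 : dist (f (y n)) (f (f^[n] (y 0))) < ε/2 :=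
        hη2 (lt_of_lt_of_le h1 (min_le_left _ _))
      have h3 : dist (f (y n)) (y (n+1)) < ε/2 :=
        lt_of_lt_of_le (hy n (by omega)) (min_le_right _ _)
      calc dist (y (n+1)) (f^[n+1] (y 0))
          ≤ dist (y (n+1)) (f (y n)) + dist (f (y n)) (f^[n+1] (y 0)) := dist_triangle _ _ _
        _ = dist (f (y n)) (y (n+1)) + dist (f (y n)) (f (f^[n] (y 0))) := by
            rw [dist_comm, Function.iterate_succ_apply']
        _ < ε/2 + ε/2 := add_lt_add h3 h2
        _ = ε := by ring

set_option maxHeartbeats 2000000 in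
lemma cesaro_infDist
    (X : Type*) [MetricSpace X] [CompactSpace X]
    (f : X → X) (hcont : Continuous f)
    (A : Set X)
    (x : ℕ → X)
    (hx : Tendsto (fun n => (∑ i ∈ Finset.range n, dist (f (x i)) (x (i + 1))) / n)
      atTop (nhds 0))
    (hdens : ∀ ε > 0, ∃ n : ℕ, 0 < n ∧ ∀ z : X,
      (((Finset.range n).filter (fun i => Metric.infDist (f^[i] z) A < ε)).card : ℝ) / n
        > 1 - ε) :
    Tendsto (fun n => (∑ i ∈ Finset.range n, Metric.infDist (x i) A) / n) atTop (nhds 0) := by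
  rcases A.eq_empty_or_nonempty with hA | ⟨a₀, ha₀⟩
  · subst hA
    simp only [Metric.infDist_empty, Finset.sum_const, smul_zero, zero_div]
    exact tendsto_const_nhds
  -- bound D
  have hXb := (isCompact_univ (X := X)).isBounded
  set D : ℝ := max 1 (Metric.diam (Set.univ : Set X)) with hD_def
  have hD1 : (1:ℝ) ≤ D := le_max_left _ _
  have hDpos : (0:ℝ) < D := lt_of_lt_of_le one_pos hD1
  have haD : ∀ y : X, Metric.infDist y A ≤ D := by
    intro y
    calc Metric.infDist y A ≤ dist y a₀ := Metric.infDist_le_dist_of_mem ha₀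
      _ ≤ Metric.diam (Set.univ : Set X) :=
          Metric.dist_le_diam_of_mem hXb (Set.mem_univ y) (Set.mem_univ a₀)
      _ ≤ D := le_max_right _ _
  have hanneg : ∀ i, 0 ≤ Metric.infDist (x i) A := fun i => Metric.infDist_nonneg
  have henneg : ∀ i, 0 ≤ dist (f (x i)) (x (i+1)) := fun i => dist_nonneg
  rw [Metric.tendsto_atTop]
  intro ε hε
  set ε₁ : ℝ := ε / (5 + D) with hε₁_def
  have hε₁ : 0 < ε₁ := by positivity
  obtain ⟨n₀, hn₀pos, hn₀⟩ := hdens ε₁ hε₁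
  have hn₀R : (0:ℝ) < (n₀:ℝ) := by exact_mod_cast hn₀pos
  obtain ⟨δ, hδpos, hδle, hδ⟩ := shadow_lemma f hcont n₀ ε₁ hε₁
  set θ : ℝ := ε₁ * δ / ((n₀:ℝ) * D) with hθ_def
  have hθpos : 0 < θ := by positivity
  obtain ⟨N₁, hN₁⟩ := Metric.tendsto_atTop.mp hx θ hθpos
  obtain ⟨N₂, hN₂⟩ := exists_nat_ge ((n₀:ℝ) * D / ε₁)
  refine ⟨max N₁ N₂, fun n hn => ?_⟩
  have hnN₁ : N₁ ≤ n := le_trans (le_max_left _ _) hn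
  have hnN₂ : N₂ ≤ n := le_trans (le_max_right _ _) hn
  have hnR : (0:ℝ) < (n:ℝ) := by
    have h0 : (0:ℝ) < (n₀:ℝ) * D / ε₁ := by positivity
    have : (0:ℝ) < (N₂:ℝ) := lt_of_lt_of_le h0 hN₂
    have : 0 < N₂ := by exact_mod_cast this
    exact_mod_cast lt_of_lt_of_le this hnN₂
  -- the error sum bound
  have hSe : (∑ i ∈ Finset.range n, dist (f (x i)) (x (i+1))) < θ * n := by
    have h1 := hN₁ n hnN₁
    rw [Real.dist_eq, sub_zero, abs_of_nonneg (by positivity)] at h1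
    rw [div_lt_iff₀ hnR] at h1
    linarith
  -- decompose n into blocks
  set q := n / n₀ with hq_def
  have hqn : q * n₀ ≤ n := Nat.div_mul_le_self n n₀
  have hqnR : ((q*n₀ : ℕ):ℝ) ≤ (n:ℝ) := by exact_mod_cast hqn
  have hrem : n - q * n₀ < n₀ := by
    show n - (n / n₀) * n₀ < n₀
    have h1 := Nat.div_add_mod n n₀
    have h2 := Nat.mod_lt n hn₀pos
    have h3 : n₀ * (n / n₀) = (n / n₀) * n₀ := Nat.mul_comm _ _
    omega
  -- good block estimate
  have hgood : ∀ k : ℕ, (∀ j < n₀, dist (f (x (k*n₀+j))) (x (k*n₀+(j+1))) < δ) →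
      ∑ j ∈ Finset.range n₀, Metric.infDist (x (k*n₀+j)) A ≤ (2*ε₁ + ε₁*D) * n₀ := by
    intro k hk
    have hsh : ∀ j ≤ n₀, dist (x (k*n₀+j)) (f^[j] (x (k*n₀+0))) < ε₁ :=
      hδ (fun j => x (k*n₀+j)) hk
    simp only [Nat.add_zero] at hsh
    have hGc := hn₀ (x (k*n₀))
    rw [gt_iff_lt, lt_div_iff₀ hn₀R] at hGc
    have hsplit := Finset.sum_filter_add_sum_filter_not (Finset.range n₀)
      (fun j => Metric.infDist (f^[j] (x (k*n₀))) A < ε₁)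
      (fun j => Metric.infDist (x (k*n₀+j)) A)
    have h1 : ∑ j ∈ (Finset.range n₀).filter
          (fun j => Metric.infDist (f^[j] (x (k*n₀))) A < ε₁),
          Metric.infDist (x (k*n₀+j)) A
        ≤ (((Finset.range n₀).filter
          (fun j => Metric.infDist (f^[j] (x (k*n₀))) A < ε₁)).card : ℝ) * (2*ε₁) := by
      rw [← nsmul_eq_mul]
      apply Finset.sum_le_card_nsmul
      intro j hj
      rw [Finset.mem_filter, Finset.mem_range] at hj
      calc Metric.infDist (x (k*n₀+j)) A
          ≤ Metric.infDist (f^[j] (x (k*n₀))) A + dist (x (k*n₀+j)) (f^[j] (x (k*n₀))) :=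
            Metric.infDist_le_infDist_add_dist
        _ ≤ ε₁ + ε₁ := by
            have := hsh j (le_of_lt hj.1)
            have := hj.2
            linarith
        _ = 2*ε₁ := by ring
    have h2 : ∑ j ∈ (Finset.range n₀).filter
          (fun j => ¬ Metric.infDist (f^[j] (x (k*n₀))) A < ε₁),
          Metric.infDist (x (k*n₀+j)) A
        ≤ (((Finset.range n₀).filter
          (fun j => ¬ Metric.infDist (f^[j] (x (k*n₀))) A < ε₁)).card : ℝ) * D := by
      rw [← nsmul_eq_mul]
      exact Finset.sum_le_card_nsmul _ _ _ (fun j _ => haD _)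
    have hcards := Finset.card_filter_add_card_filter_not
      (s := Finset.range n₀) (fun j => Metric.infDist (f^[j] (x (k*n₀))) A < ε₁)
    have hcardsR : (((Finset.range n₀).filter
          (fun j => Metric.infDist (f^[j] (x (k*n₀))) A < ε₁)).card : ℝ)
        + (((Finset.range n₀).filter
          (fun j => ¬ Metric.infDist (f^[j] (x (k*n₀))) A < ε₁)).card : ℝ) = (n₀:ℝ) := by
      rw [← Nat.cast_add]
      exact_mod_cast congrArg Nat.cast (by simpa using hcards)
    have hGle : (((Finset.range n₀).filter
          (fun j => Metric.infDist (f^[j] (x (k*n₀))) A < ε₁)).card : ℝ) ≤ (n₀:ℝ) := by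
      have := Finset.card_filter_le (Finset.range n₀)
        (fun j => Metric.infDist (f^[j] (x (k*n₀))) A < ε₁)
      rw [Finset.card_range] at this
      exact_mod_cast this
    have hBc : (0:ℝ) ≤ (((Finset.range n₀).filter
        (fun j => ¬ Metric.infDist (f^[j] (x (k*n₀))) A < ε₁)).card : ℝ) := Nat.cast_nonneg _
    nlinarith [hsplit, h1, h2, hGc, hcardsR, hGle, hε₁.le, hDpos.le, hBc]
  -- bad blocks count
  have hblk := sum_blocks (fun i => dist (f (x i)) (x (i+1))) n₀ q
  have hblka := sum_blocks (fun i => Metric.infDist (x i) A) n₀ q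
  have hsplitq := Finset.sum_filter_add_sum_filter_not (Finset.range q)
    (fun k => ∀ j < n₀, dist (f (x (k*n₀+j))) (x (k*n₀+(j+1))) < δ)
    (fun k => ∑ j ∈ Finset.range n₀, Metric.infDist (x (k*n₀+j)) A)
  have hbadcount : ((((Finset.range q).filter
        (fun k => ¬ ∀ j < n₀, dist (f (x (k*n₀+j))) (x (k*n₀+(j+1))) < δ)).card : ℝ)) * δ
      ≤ ∑ i ∈ Finset.range n, dist (f (x i)) (x (i+1)) := by
    have hb1 : ∀ k ∈ (Finset.range q).filter
        (fun k => ¬ ∀ j < n₀, dist (f (x (k*n₀+j))) (x (k*n₀+(j+1))) < δ),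
        δ ≤ ∑ j ∈ Finset.range n₀, dist (f (x (k*n₀+j))) (x (k*n₀+j+1)) := by
      intro k hk
      rw [Finset.mem_filter] at hk
      push_neg at hk
      obtain ⟨_, j, hj, hjd⟩ := hk
      calc δ ≤ dist (f (x (k*n₀+j))) (x (k*n₀+(j+1))) := hjd
        _ ≤ ∑ j ∈ Finset.range n₀, dist (f (x (k*n₀+j))) (x (k*n₀+j+1)) :=
            Finset.single_le_sum (f := fun j => dist (f (x (k*n₀+j))) (x (k*n₀+j+1)))
              (fun i _ => dist_nonneg) (Finset.mem_range.mpr hj)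
    calc ((((Finset.range q).filter
          (fun k => ¬ ∀ j < n₀, dist (f (x (k*n₀+j))) (x (k*n₀+(j+1))) < δ)).card : ℝ)) * δ
        = (((Finset.range q).filter
          (fun k => ¬ ∀ j < n₀, dist (f (x (k*n₀+j))) (x (k*n₀+(j+1))) < δ)).card) • δ := by
          rw [nsmul_eq_mul]
      _ ≤ ∑ k ∈ (Finset.range q).filter
          (fun k => ¬ ∀ j < n₀, dist (f (x (k*n₀+j))) (x (k*n₀+(j+1))) < δ),
          ∑ j ∈ Finset.range n₀, dist (f (x (k*n₀+j))) (x (k*n₀+j+1)) :=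
          Finset.card_nsmul_le_sum _ _ _ hb1
      _ ≤ ∑ k ∈ Finset.range q, ∑ j ∈ Finset.range n₀, dist (f (x (k*n₀+j))) (x (k*n₀+j+1)) :=
          Finset.sum_le_sum_of_subset_of_nonneg (Finset.filter_subset _ _)
            (fun k _ _ => Finset.sum_nonneg (fun j _ => dist_nonneg))
      _ = ∑ i ∈ Finset.range (q*n₀), dist (f (x i)) (x (i+1)) := hblk.symm
      _ ≤ ∑ i ∈ Finset.range n, dist (f (x i)) (x (i+1)) :=
          Finset.sum_le_sum_of_subset_of_nonneg
            (Finset.range_subset_range.mpr hqn) (fun i _ _ => dist_nonneg)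
  -- block sum bound
  have hblocksum : ∑ i ∈ Finset.range (q*n₀), Metric.infDist (x i) A
      ≤ (q:ℝ)*((2*ε₁+ε₁*D)*n₀) + ((((Finset.range q).filter
          (fun k => ¬ ∀ j < n₀, dist (f (x (k*n₀+j))) (x (k*n₀+(j+1))) < δ)).card : ℝ))*(D*n₀) := by
    rw [hblka, ← hsplitq]
    have hg1 : ∑ k ∈ (Finset.range q).filter
          (fun k => ∀ j < n₀, dist (f (x (k*n₀+j))) (x (k*n₀+(j+1))) < δ),
          ∑ j ∈ Finset.range n₀, Metric.infDist (x (k*n₀+j)) A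
        ≤ (q:ℝ)*((2*ε₁+ε₁*D)*n₀) := by
      calc ∑ k ∈ (Finset.range q).filter
            (fun k => ∀ j < n₀, dist (f (x (k*n₀+j))) (x (k*n₀+(j+1))) < δ),
            ∑ j ∈ Finset.range n₀, Metric.infDist (x (k*n₀+j)) A
          ≤ ((Finset.range q).filter
            (fun k => ∀ j < n₀, dist (f (x (k*n₀+j))) (x (k*n₀+(j+1))) < δ)).card
              • ((2*ε₁+ε₁*D)*(n₀:ℝ)) := by
            apply Finset.sum_le_card_nsmul
            intro k hk
            exact hgood k (Finset.mem_filter.mp hk).2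
        _ ≤ q • ((2*ε₁+ε₁*D)*(n₀:ℝ)) := by
            apply nsmul_le_nsmul_left
            · positivity
            · simpa using Finset.card_filter_le (Finset.range q) _
        _ = (q:ℝ)*((2*ε₁+ε₁*D)*n₀) := by rw [nsmul_eq_mul]
    have hg2 : ∑ k ∈ (Finset.range q).filter
          (fun k => ¬ ∀ j < n₀, dist (f (x (k*n₀+j))) (x (k*n₀+(j+1))) < δ),
          ∑ j ∈ Finset.range n₀, Metric.infDist (x (k*n₀+j)) A
        ≤ ((((Finset.range q).filter
          (fun k => ¬ ∀ j < n₀, dist (f (x (k*n₀+j))) (x (k*n₀+(j+1))) < δ)).card : ℝ))*(D*n₀) := by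
      rw [← nsmul_eq_mul]
      apply Finset.sum_le_card_nsmul
      intro k _
      calc ∑ j ∈ Finset.range n₀, Metric.infDist (x (k*n₀+j)) A
          ≤ (Finset.range n₀).card • D := Finset.sum_le_card_nsmul _ _ _ (fun j _ => haD _)
        _ = D*n₀ := by rw [Finset.card_range, nsmul_eq_mul]; ring
    linarith
  -- tail
  have htail : ∑ i ∈ Finset.Ico (q*n₀) n, Metric.infDist (x i) A ≤ (n₀:ℝ)*D := by
    calc ∑ i ∈ Finset.Ico (q*n₀) n, Metric.infDist (x i) A
        ≤ (Finset.Ico (q*n₀) n).card • D := Finset.sum_le_card_nsmul _ _ _ (fun i _ => haD _)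
      _ = ((n - q*n₀ : ℕ):ℝ) * D := by rw [Nat.card_Ico, nsmul_eq_mul]
      _ ≤ (n₀:ℝ)*D := by
          apply mul_le_mul_of_nonneg_right _ hDpos.le
          exact_mod_cast hrem.le
  have hsplitn : ∑ i ∈ Finset.range n, Metric.infDist (x i) A
      = ∑ i ∈ Finset.range (q*n₀), Metric.infDist (x i) A
        + ∑ i ∈ Finset.Ico (q*n₀) n, Metric.infDist (x i) A := by
    simp only [Finset.range_eq_Ico]
    exact (Finset.sum_Ico_consecutive _ (Nat.zero_le _) hqn).symm
  -- bad term bound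
  have h8 : ((((Finset.range q).filter
        (fun k => ¬ ∀ j < n₀, dist (f (x (k*n₀+j))) (x (k*n₀+(j+1))) < δ)).card : ℝ))*((n₀:ℝ)*D)
      ≤ ε₁ * n := by
    have h5 : ((((Finset.range q).filter
        (fun k => ¬ ∀ j < n₀, dist (f (x (k*n₀+j))) (x (k*n₀+(j+1))) < δ)).card : ℝ)) * δ
        < θ * n := lt_of_le_of_lt hbadcount hSe
    have h6 := mul_le_mul_of_nonneg_right h5.le (by positivity : (0:ℝ) ≤ (n₀:ℝ)*D)
    have h7 : θ*n*((n₀:ℝ)*D) = (ε₁*n)*δ := by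
      rw [hθ_def]
      field_simp
    have h9 : (((((Finset.range q).filter
        (fun k => ¬ ∀ j < n₀, dist (f (x (k*n₀+j))) (x (k*n₀+(j+1))) < δ)).card : ℝ))*((n₀:ℝ)*D))*δ
        ≤ (ε₁*n)*δ := by linarith [h6, h7]
    exact le_of_mul_le_mul_right h9 hδpos
  -- n₀ D ≤ ε₁ n
  have hn₀Dn : (n₀:ℝ)*D ≤ ε₁ * n := by
    have h1 : ((n₀:ℝ)*D)/ε₁ ≤ (n:ℝ) := le_trans hN₂ (by exact_mod_cast hnN₂)
    rw [div_le_iff₀ hε₁] at h1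
    linarith [h1]
  -- conclusion
  rw [Real.dist_eq, sub_zero,
    abs_of_nonneg (div_nonneg (Finset.sum_nonneg (fun i _ => Metric.infDist_nonneg)) hnR.le),
    div_lt_iff₀ hnR]
  have hε₁ε : ε₁ * (5+D) = ε := by
    rw [hε₁_def]
    field_simp
  have hnn2 : (0:ℝ) ≤ 2*ε₁+ε₁*D := by positivity
  have hq' : (q:ℝ)*((2*ε₁+ε₁*D)*n₀) ≤ (2*ε₁+ε₁*D)*(n:ℝ) := by
    have heq : (q:ℝ)*((2*ε₁+ε₁*D)*n₀) = ((q*n₀:ℕ):ℝ)*(2*ε₁+ε₁*D) := by push_cast; ring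
    have h2 := mul_le_mul_of_nonneg_right hqnR hnn2
    linarith [h2, heq.le, heq.ge]
  have hcomm : ((((Finset.range q).filter
        (fun k => ¬ ∀ j < n₀, dist (f (x (k*n₀+j))) (x (k*n₀+(j+1))) < δ)).card : ℝ))*(D*n₀)
      = ((((Finset.range q).filter
        (fun k => ¬ ∀ j < n₀, dist (f (x (k*n₀+j))) (x (k*n₀+(j+1))) < δ)).card : ℝ))*((n₀:ℝ)*D) := by
    ring
  have hfin : (2*ε₁+ε₁*D)*(n:ℝ) + ε₁*n + ε₁*n < ε*n := by
    rw [← hε₁ε]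
    nlinarith [mul_pos hε₁ hnR]
  linarith [hsplitn, hblocksum, htail, h8, hn₀Dn, hq', hcomm, hfin]

/-- Lemma 3.2: an asymptotic average pseudo-orbit of `f` converges to the
invariant set `A` off a set of density zero, under the density assumption on
orbits near `A`. -/
theorem aapo_converges_to_A_off_density_zero
    (X : Type*) [MetricSpace X] [CompactSpace X]
    (f : X → X) (hcont : Continuous f)
    (A : Set X) (hA_closed : IsClosed A) (hA_inv : Set.MapsTo f A A)
    (x : ℕ → X)
    (hx : Tendsto (fun n => (∑ i ∈ Finset.range n, dist (f (x i)) (x (i + 1))) / n)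
      atTop (nhds 0))
    (hdens : ∀ ε > 0, ∃ n : ℕ, 0 < n ∧ ∀ z : X,
      (((Finset.range n).filter (fun i => Metric.infDist (f^[i] z) A < ε)).card : ℝ) / n
        > 1 - ε) :
    ∃ J : Set ℕ,
      Tendsto (fun n => (((Finset.range n).filter (fun i => i ∈ J)).card : ℝ) / n)
        atTop (nhds 0) ∧
      ∀ ε > 0, ∃ N : ℕ, ∀ i ≥ N, i ∉ J → Metric.infDist (x i) A < ε := by
  exact density_zero_of_cesaro (fun i => Metric.infDist (x i) A)
    (fun i => Metric.infDist_nonneg)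
    (cesaro_infDist X f hcont A x hx hdens)
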